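/- Let C be cocomplete and cowellpowered with an (E,M)-factorisation system in which E consists of epimorphisms, and suppose the endofunctor Σ : C → C preserves E-cointersections (wide pushouts of epimorphisms in E). Then every morphism f : ΣX → Y in C has an E-cobase, and it is given by the cointersection (join in the complete lattice Quot_E(X)) of the set {q ∈ Quot_E(X) | there exists g with g ∘ Σq = f}. -/

import Mathlib

open CategoryTheory CategoryTheory.Limits

universe v u

namespace TreeAutPaper

variable {C : Type u} [Category.{v} C]

/-- A representative of a quotient of `X` lying in the class `E`:
an epimorphism out of `X` belonging to `E`. -/
structure EQuot (E : MorphismProperty C) (X : C) where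
  obj : C
  hom : X ⟶ obj
  epi : Epi hom
  mem : E hom

/-- The order on quotients: `q ≤ r` iff `r = h ∘ q` for some `h`. -/
def EQuot.le {E : MorphismProperty C} {X : C} (q r : EQuot E X) : Prop :=
  ∃ h : q.obj ⟶ r.obj, q.hom ≫ h = r.hom

/-- Two quotient representatives are equivalent when each is below the other. -/
def EQuot.equiv {E : MorphismProperty C} {X : C} (q r : EQuot E X) : Prop :=
  q.le r ∧ r.le q

/-- `C` is cowellpowered: quotients (epimorphisms out of an object, up to equivalence)
of every object form a set (an essentially `v`-small collection). -/
def Cowellpowered (C : Type u) [Category.{v} C] : Prop :=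
  ∀ X : C, Small.{v} (Quot (fun q r : EQuot (⊤ : MorphismProperty C) X => EQuot.equiv q r))

/-- An `(E,M)`-factorisation system: both classes are closed under composition with
isomorphisms, every morphism factors as an `E`-morphism followed by an `M`-morphism, and
we have a unique diagonal fill-in property. -/
structure IsFactorizationSystem (E M : MorphismProperty C) : Prop where
  respectsIso_E : E.RespectsIso
  respectsIso_M : M.RespectsIso
  factor : ∀ {X Y : C} (f : X ⟶ Y), ∃ (Z : C) (e : X ⟶ Z) (m : Z ⟶ Y), E e ∧ M m ∧ e ≫ m = f
  diag : ∀ {A B X Y : C} (e : A ⟶ B) (m : X ⟶ Y) (f : A ⟶ X) (g : B ⟶ Y),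
    E e → M m → f ≫ m = e ≫ g → ∃! d : B ⟶ X, e ≫ d = f ∧ d ≫ m = g

/-- `S` preserves `E`-cointersections, i.e. wide pushouts of families of epimorphisms
lying in `E`. -/
def PreservesECointersections (E : MorphismProperty C) (S : C ⥤ C) : Prop :=
  ∀ (J : Type (max u v)) (X : C) (objs : J → C) (arrows : ∀ j : J, X ⟶ objs j),
    (∀ j, E (arrows j)) → (∀ j, Epi (arrows j)) →
    ∀ c : Cocone (WidePushoutShape.wideSpan X objs arrows),
      Nonempty (IsColimit c) → Nonempty (IsColimit (S.mapCocone c))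

/-- `f : ΣX ⟶ Y` factors through (the image under `Σ` of) the quotient `q`. -/
def FactorsThru {E : MorphismProperty C} (S : C ⥤ C) {X Y : C} (f : S.obj X ⟶ Y)
    (q : EQuot E X) : Prop :=
  ∃ g : S.obj q.obj ⟶ Y, S.map q.hom ≫ g = f

/-- `q` is the `E`-cobase of `f : ΣX ⟶ Y`: the greatest quotient of `X` in `E`
through whose `Σ`-image `f` factors. -/
def IsCobase (E : MorphismProperty C) (S : C ⥤ C) {X Y : C} (f : S.obj X ⟶ Y)
    (q : EQuot E X) : Prop :=
  FactorsThru S f q ∧ ∀ r : EQuot E X, FactorsThru S f r → r.le q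

variable (Sg : C ⥤ C)

/-- A `Σ`-tree automaton over input object `I` and output object `O`. -/
structure TreeAut (I O : C) where
  Q : Endofunctor.Algebra Sg
  i : I ⟶ Q.a
  o : Q.a ⟶ O

variable {Sg} {I O : C}

/-- `h` is a homomorphism of automata from `A` to `B`. -/
structure IsAutHom (A B : TreeAut Sg I O) (h : A.Q.a ⟶ B.Q.a) : Prop where
  alg : Sg.map h ≫ B.Q.str = A.Q.str ≫ h
  hi : A.i ≫ h = B.i
  ho : h ≫ B.o = A.o

/-- `(B, q)` is a quotient automaton of `A`: `q` is an epimorphism lying in `E`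
which is a homomorphism of automata. -/
structure IsQuotAut (E : MorphismProperty C) (A B : TreeAut Sg I O)
    (q : A.Q.a ⟶ B.Q.a) : Prop where
  isHom : IsAutHom A B q
  epi : Epi q
  mem : E q

/-- `(M, qm)` is the minimisation of `A`: a quotient automaton through which every
quotient automaton of `A` factors by a (necessarily unique) automaton homomorphism. -/
def IsMinimisation (E : MorphismProperty C) (A M : TreeAut Sg I O)
    (qm : A.Q.a ⟶ M.Q.a) : Prop :=
  IsQuotAut E A M qm ∧
    ∀ (B : TreeAut Sg I O) (q' : A.Q.a ⟶ B.Q.a), IsQuotAut E A B q' →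
      ∃! h : B.Q.a ⟶ M.Q.a, IsAutHom B M h ∧ q' ≫ h = qm

/-- `A` is simple: every quotient automaton of `A` has its quotient map an isomorphism. -/
def IsSimple (E : MorphismProperty C) (A : TreeAut Sg I O) : Prop :=
  ∀ (B : TreeAut Sg I O) (q : A.Q.a ⟶ B.Q.a), IsQuotAut E A B q → IsIso q

section Varietor

variable (Fr : C ⥤ Endofunctor.Algebra Sg) (adj : Fr ⊣ Endofunctor.Algebra.forget Sg)

/-- The reachability map of an automaton: the underlying morphism of the adjoint
transpose of the initial-state assignment. -/
def rch (A : TreeAut Sg I O) : (Fr.obj I).a ⟶ A.Q.a :=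
  ((adj.homEquiv I A.Q).symm A.i).f

/-- The language of an automaton. -/
def lang (A : TreeAut Sg I O) : (Fr.obj I).a ⟶ O :=
  rch Fr adj A ≫ A.o

/-- The automaton `(Σ◇I, α_I, η_I, L)` on the free `Σ`-algebra over `I`. -/
def freeAut (L : (Fr.obj I).a ⟶ O) : TreeAut Sg I O :=
  { Q := Fr.obj I
    i := adj.unit.app I
    o := L }

/-- `A` is reachable: its reachability map lies in `E`. -/
def Reachable (E : MorphismProperty C) (A : TreeAut Sg I O) : Prop :=
  E (rch Fr adj A)

/-- `A` is minimal: reachable, and every reachable automaton with the same language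
admits a (necessarily unique) automaton homomorphism into `A`. -/
def Minimal (E : MorphismProperty C) (A : TreeAut Sg I O) : Prop :=
  Reachable Fr adj E A ∧
    ∀ B : TreeAut Sg I O, Reachable Fr adj E B → lang Fr adj B = lang Fr adj A →
      ∃! h : B.Q.a ⟶ A.Q.a, IsAutHom B A h

end Varietor


section AuxCobase

variable {C : Type u} [Category.{v} C]

lemma auxEquivRel {E : MorphismProperty C} {X : C} :
    Equivalence (fun q r : EQuot E X => EQuot.equiv q r) := by
  constructor
  · intro q; exact ⟨⟨𝟙 _, Category.comp_id _⟩, ⟨𝟙 _, Category.comp_id _⟩⟩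
  · rintro q r ⟨h1, h2⟩; exact ⟨h2, h1⟩
  · rintro q r s ⟨⟨h1, e1⟩, ⟨h2, e2⟩⟩ ⟨⟨k1, f1⟩, ⟨k2, f2⟩⟩
    exact ⟨⟨h1 ≫ k1, by rw [← Category.assoc, e1, f1]⟩,
           ⟨k2 ≫ h2, by rw [← Category.assoc, f2, e2]⟩⟩

end AuxCobase

/-- **Existence of cobases.** If `Σ` preserves `E`-cointersections, then
every morphism `f : ΣX ⟶ Y` has an `E`-cobase, and the cobase is the cointersection
(i.e. the join, least upper bound, in the complete lattice `Quot_E(X)`) of the set of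
quotients `q` with `f = g ∘ Σq` for some `g`. -/
theorem cobase_exists
    {C : Type u} [Category.{v} C] [HasColimits C] (hcwp : Cowellpowered C)
    (E M : MorphismProperty C) (hfs : IsFactorizationSystem E M)
    (hE : ∀ ⦃X Y : C⦄ (f : X ⟶ Y), E f → Epi f)
    (Sg : C ⥤ C) (hpres : PreservesECointersections E Sg)
    {X Y : C} (f : Sg.obj X ⟶ Y) :
    ∃ q : EQuot E X, IsCobase E Sg f q ∧
      (∀ r : EQuot E X, FactorsThru Sg f r → r.le q) ∧
      (∀ u : EQuot E X, (∀ r : EQuot E X, FactorsThru Sg f r → r.le u) → q.le u) := by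
  classical
  haveI := hcwp X
  haveI := hfs.respectsIso_E
  set R := fun q r : EQuot (⊤ : MorphismProperty C) X => EQuot.equiv q r with hR
  let P : EQuot (⊤ : MorphismProperty C) X → Prop :=
    fun q => E q.hom ∧ ∃ g, Sg.map q.hom ≫ g = f
  let S := { c : Quot R // ∃ q, Quot.mk R q = c ∧ P q }
  let J : Type (max u v) := ULift.{u} (Shrink.{v} S)
  let cls : J → S := fun j => (equivShrink S).symm j.down
  have prop : ∀ j : J, ∃ q, Quot.mk R q = (cls j).1 ∧ P q := fun j => (cls j).2
  let rep : J → EQuot (⊤ : MorphismProperty C) X := fun j => (prop j).choose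
  have repc : ∀ j, Quot.mk R (rep j) = (cls j).1 := fun j => (prop j).choose_spec.1
  have repE : ∀ j, E (rep j).hom := fun j => (prop j).choose_spec.2.1
  have repF : ∀ j, ∃ g, Sg.map (rep j).hom ≫ g = f := fun j => (prop j).choose_spec.2.2
  let objs : J → C := fun j => (rep j).obj
  let arrows : ∀ j : J, X ⟶ objs j := fun j => (rep j).hom
  let D := WidePushoutShape.wideSpan X objs arrows
  haveI : HasColimitsOfShape (WidePushoutShape J) C :=
    hasColimitsOfShape_of_equivalence
      (WidePushoutShape.equivalenceOfEquiv (J := Shrink.{v} S) J Equiv.ulift.symm)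
  let c := colimit.cocone D
  let hc := colimit.isColimit D
  let W := c.pt
  let w : X ⟶ W := c.ι.app none
  let ι : ∀ j, objs j ⟶ W := fun j => c.ι.app (some j)
  have hwι : ∀ j, arrows j ≫ ι j = w := fun j => by
    have := c.ι.naturality (WidePushoutShape.Hom.init j)
    simp [D, ι, w] at this
    exact this
  have wext : ∀ {Z : C} (a b : W ⟶ Z), w ≫ a = w ≫ b →
      (∀ j, ι j ≫ a = ι j ≫ b) → a = b := by
    intro Z a b h0 hj
    apply hc.hom_ext
    rintro (_ | j)
    · exact h0
    · exact hj j
  have wepi : Epi w := by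
    constructor
    intro Z a b h
    refine wext a b h (fun j => ?_)
    haveI := (rep j).epi
    have : arrows j ≫ ι j ≫ a = arrows j ≫ ι j ≫ b := by
      rw [← Category.assoc, hwι, ← Category.assoc, hwι, h]
    exact (cancel_epi (arrows j)).mp this
  -- E w : factor and use the diagonal property
  obtain ⟨Z, e, m, hEe, hMm, hem⟩ := hfs.factor w
  have dj : ∀ j, ∃ d : objs j ⟶ Z, arrows j ≫ d = e ∧ d ≫ m = ι j := by
    intro j
    obtain ⟨d, ⟨hd1, hd2⟩, -⟩ :=
      hfs.diag (arrows j) m e (ι j) (repE j) hMm (by rw [hem, hwι])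
    exact ⟨d, hd1, hd2⟩
  let coc : Cocone D := WidePushoutShape.mkCocone (F := D) e (fun j => (dj j).choose)
    (fun j => by exact (dj j).choose_spec.1)
  let t : W ⟶ Z := hc.desc coc
  have ht0 : w ≫ t = e := hc.fac coc none
  have htm : t ≫ m = 𝟙 W := by
    haveI := wepi
    rw [← cancel_epi w, ← Category.assoc, ht0, hem, Category.comp_id]
  have hmt : m ≫ t = 𝟙 Z := by
    haveI : Epi e := hE e hEe
    rw [← cancel_epi e, ← Category.assoc]
    rw [hem, ht0, Category.comp_id]
  haveI : IsIso m := ⟨t, hmt, htm⟩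
  have hEw : E w := by
    rw [← hem]
    exact MorphismProperty.RespectsIso.postcomp E m e hEe
  let q : EQuot E X := ⟨W, w, wepi, hEw⟩
  -- the factorisation of f through Sg.map w
  obtain ⟨hmc⟩ := hpres J X objs arrows repE (fun j => (rep j).epi) c ⟨hc⟩
  let coc2 : Cocone (D ⋙ Sg) := WidePushoutShape.mkCocone (F := D ⋙ Sg) f
    (fun j => (repF j).choose)
    (fun j => by exact (repF j).choose_spec)
  have hfac : FactorsThru Sg f q := by
    refine ⟨hmc.desc coc2, ?_⟩
    have := hmc.fac coc2 none
    exact this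
  -- upper bound
  have hub : ∀ r : EQuot E X, FactorsThru Sg f r → r.le q := by
    intro r hr
    obtain ⟨g, hg⟩ := hr
    let r' : EQuot (⊤ : MorphismProperty C) X := ⟨r.obj, r.hom, r.epi, trivial⟩
    have hP : P r' := ⟨r.mem, ⟨g, hg⟩⟩
    let s : S := ⟨Quot.mk R r', r', rfl, hP⟩
    let j : J := ULift.up (equivShrink S s)
    have hcls : (cls j).1 = Quot.mk R r' := by
      show ((equivShrink S).symm (equivShrink S s)).1 = _
      rw [Equiv.symm_apply_apply]
    have hmk : Quot.mk R (rep j) = Quot.mk R r' := (repc j).trans hcls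
    have hequiv : R (rep j) r' := auxEquivRel.eqvGen_iff.mp (Quot.eq.mp hmk)
    obtain ⟨-, ⟨h, hh⟩⟩ := hequiv
    exact ⟨h ≫ ι j, by rw [← Category.assoc]; rw [show r.hom ≫ h = arrows j from hh, hwι]⟩
  -- least upper bound
  have hlub : ∀ u : EQuot E X, (∀ r : EQuot E X, FactorsThru Sg f r → r.le u) → q.le u := by
    intro u hu
    have hj : ∀ j, ∃ h : objs j ⟶ u.obj, arrows j ≫ h = u.hom := fun j =>
      hu ⟨objs j, arrows j, (rep j).epi, repE j⟩ (repF j)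
    let coc3 : Cocone D := WidePushoutShape.mkCocone (F := D) u.hom (fun j => (hj j).choose)
      (fun j => by exact (hj j).choose_spec)
    exact ⟨hc.desc coc3, hc.fac coc3 none⟩
  exact ⟨q, ⟨hfac, hub⟩, hub, hlub⟩

end TreeAutPaper
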